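/- Let σ ⊆ ℝⁿ be a closed convex cone and V = span(σ) the linear span of σ. If a sequence x_j ∈ ℝⁿ can be written x_j = x_j' + x_j'' with x_j' ∈ σ, the Euclidean distance from x_j' to the relative boundary of σ tending to +∞, and x_j'' bounded, then for every q in the relative interior of the dual cone σ^∨ ∩ V (within V), ⟨q, x_j⟩ → +∞. -/

import Mathlib

open Filter

/-- The dual cone `σ^∨ = {v | ⟨v,u⟩ ≥ 0 for all u ∈ σ}`. -/
def dualCone (n : ℕ) (σ : Set (EuclideanSpace ℝ (Fin n))) : Set (EuclideanSpace ℝ (Fin n)) :=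
  {v : EuclideanSpace ℝ (Fin n) | ∀ u ∈ σ, (0 : ℝ) ≤ inner ℝ v u}

/-- If `x ∈ s`, `x + v` lies in the affine span of `s`, and `‖v‖` is smaller than the distance
from `x` to the intrinsic frontier of `s`, then `x + v ∈ s`. -/
lemma aux_add_mem_of_norm_lt_infDist {E : Type*} [NormedAddCommGroup E] [NormedSpace ℝ E]
    {s : Set E} (hs : IsClosed s) {x v : E} (hx : x ∈ s)
    (hxv : x + v ∈ affineSpan ℝ s)
    (hv : ‖v‖ < Metric.infDist x (intrinsicFrontier ℝ s)) : x + v ∈ s := by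
  by_contra hout
  have hv0 : v ≠ 0 := by rintro rfl; rw [add_zero] at hout; exact hout hx
  have hvpos : (0 : ℝ) < ‖v‖ := norm_pos_iff.2 hv0
  have hxA : x ∈ affineSpan ℝ s := subset_affineSpan ℝ s hx
  have hdir : v ∈ (affineSpan ℝ s).direction := by
    have := AffineSubspace.vsub_mem_direction hxv hxA
    simpa using this
  have hline : ∀ t : ℝ, x + t • v ∈ affineSpan ℝ s := by
    intro t
    have := AffineSubspace.vadd_mem_of_mem_direction
      (Submodule.smul_mem _ t hdir) hxA
    simpa [vadd_eq_add, add_comm] using this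
  set T : Set ℝ := Set.Icc (0 : ℝ) 1 ∩ {t : ℝ | x + t • v ∈ s} with hT
  have hT0 : (0 : ℝ) ∈ T := ⟨⟨le_rfl, zero_le_one⟩, by simpa using hx⟩
  have hTne : T.Nonempty := ⟨0, hT0⟩
  have hTbdd : BddAbove T := ⟨1, fun t ht => ht.1.2⟩
  have hTclosed : IsClosed T := by
    apply isClosed_Icc.inter
    exact hs.preimage (by continuity)
  set t₀ := sSup T with ht₀def
  have ht₀T : t₀ ∈ T := hTclosed.csSup_mem hTne hTbdd
  have ht₀0 : 0 ≤ t₀ := ht₀T.1.1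
  have ht₀1 : t₀ ≤ 1 := ht₀T.1.2
  have hps : x + t₀ • v ∈ s := ht₀T.2
  have ht₀lt : t₀ < 1 := lt_of_le_of_ne ht₀1 (by
    intro h1
    apply hout
    rw [h1, one_smul] at hps
    exact hps)
  set p := x + t₀ • v with hpdef
  have hpA : p ∈ affineSpan ℝ s := hline t₀
  have hpF : p ∈ intrinsicFrontier ℝ s := by
    refine ⟨⟨p, hpA⟩, ?_, rfl⟩
    rw [frontier, Set.mem_diff]
    refine ⟨subset_closure hps, ?_⟩
    intro hint
    rw [mem_interior_iff_mem_nhds, Metric.mem_nhds_iff] at hint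
    obtain ⟨ε, hε, hball⟩ := hint
    set t := min 1 (t₀ + ε / (2 * ‖v‖)) with htdef
    have htgt : t₀ < t := lt_min ht₀lt (lt_add_of_pos_right _ (by positivity))
    have ht1 : t ≤ 1 := min_le_left _ _
    have htpos : 0 ≤ t := le_of_lt (lt_of_le_of_lt ht₀0 htgt)
    have htout : x + t • v ∉ s := by
      intro hmem
      exact absurd (le_csSup hTbdd ⟨⟨htpos, ht1⟩, hmem⟩) (not_le.2 htgt)
    have hdistpt : (⟨x + t • v, hline t⟩ : affineSpan ℝ s) ∈
        Metric.ball (⟨p, hpA⟩ : affineSpan ℝ s) ε := by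
      rw [Metric.mem_ball, Subtype.dist_eq]
      have hdeq : dist (x + t • v) p = (t - t₀) * ‖v‖ := by
        rw [dist_eq_norm]
        have h1 : x + t • v - p = (t - t₀) • v := by
          rw [hpdef]; module
        rw [h1, norm_smul, Real.norm_eq_abs, abs_of_nonneg (by linarith)]
      rw [hdeq]
      have h1 : t - t₀ ≤ ε / (2 * ‖v‖) := by
        have h2 := min_le_right 1 (t₀ + ε / (2 * ‖v‖))
        have h3 : t ≤ t₀ + ε / (2 * ‖v‖) := h2
        linarith
      have h4 : (t - t₀) * ‖v‖ ≤ (ε / (2 * ‖v‖)) * ‖v‖ := by nlinarith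
      have h5 : (ε / (2 * ‖v‖)) * ‖v‖ = ε / 2 := by field_simp
      linarith
    exact htout (hball hdistpt)
  have hle : Metric.infDist x (intrinsicFrontier ℝ s) ≤ dist x p :=
    Metric.infDist_le_dist_of_mem hpF
  have hdp : dist x p ≤ ‖v‖ := by
    rw [dist_eq_norm]
    have h1 : x - p = (-t₀) • v := by rw [hpdef]; module
    rw [h1, norm_smul, Real.norm_eq_abs, abs_of_nonpos (by linarith), neg_neg]
    nlinarith
  linarith

theorem inner_tendsto_atTop_of_deep_in_cone (n : ℕ) (σ : Set (EuclideanSpace ℝ (Fin n)))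
    (hclosed : IsClosed σ) (hconv : Convex ℝ σ)
    (hadd : ∀ x ∈ σ, ∀ y ∈ σ, x + y ∈ σ)
    (hsmul : ∀ (c : ℝ), 0 ≤ c → ∀ x ∈ σ, c • x ∈ σ)
    (hσ : σ ≠ {0})
    (V : Submodule ℝ (EuclideanSpace ℝ (Fin n))) (hV : V = Submodule.span ℝ σ)
    (x' x'' : ℕ → EuclideanSpace ℝ (Fin n))
    (hx' : ∀ j, x' j ∈ σ)
    (hdist : Tendsto (fun j => Metric.infDist (x' j) (intrinsicFrontier ℝ σ)) atTop atTop)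
    (hx'' : Bornology.IsBounded (Set.range x''))
    (q : EuclideanSpace ℝ (Fin n))
    (hq : q ∈ intrinsicInterior ℝ (dualCone n σ ∩ (V : Set (EuclideanSpace ℝ (Fin n))))) :
    Tendsto (fun j => (inner ℝ q (x' j + x'' j) : ℝ)) atTop atTop := by
  -- the intrinsic frontier is nonempty
  have hF : (intrinsicFrontier ℝ σ).Nonempty := by
    rw [Set.nonempty_iff_ne_empty]
    intro hFe
    obtain ⟨j, hj⟩ := (hdist.eventually (eventually_ge_atTop 1)).exists
    rw [hFe, Metric.infDist_empty] at hj
    linarith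
  have hσne : σ.Nonempty := by
    obtain ⟨p, hp⟩ := hF
    exact ⟨p, intrinsicFrontier_subset hclosed hp⟩
  have h0σ : (0 : EuclideanSpace ℝ (Fin n)) ∈ σ := by
    obtain ⟨w, hw⟩ := hσne
    simpa using hsmul 0 le_rfl w hw
  have hσV : σ ⊆ (V : Set (EuclideanSpace ℝ (Fin n))) := hV ▸ Submodule.subset_span
  -- span direction facts
  have hVdir : V ≤ (affineSpan ℝ σ).direction := by
    rw [direction_affineSpan, hV]
    apply Submodule.span_le.2
    intro u hu
    have h1 : u -ᵥ (0 : EuclideanSpace ℝ (Fin n)) ∈ σ -ᵥ σ := Set.vsub_mem_vsub hu h0σ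
    have h2 := Submodule.subset_span (R := ℝ) h1
    rw [vectorSpan_def]
    simpa using h2
  have hmemA : ∀ x ∈ σ, ∀ v ∈ V, x + v ∈ affineSpan ℝ σ := by
    intro x hx v hv
    have := AffineSubspace.vadd_mem_of_mem_direction (hVdir hv)
      (subset_affineSpan ℝ σ hx)
    simpa [vadd_eq_add, add_comm] using this
  have hAV : ∀ y ∈ affineSpan ℝ σ, y ∈ V := by
    intro y hy
    have h0A : (0 : EuclideanSpace ℝ (Fin n)) ∈ affineSpan ℝ σ := subset_affineSpan ℝ σ h0σ
    have h1 : y -ᵥ (0 : EuclideanSpace ℝ (Fin n)) ∈ (affineSpan ℝ σ).direction :=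
      AffineSubspace.vsub_mem_direction hy h0A
    rw [direction_affineSpan] at h1
    have hsub : vectorSpan ℝ σ ≤ V := by
      rw [vectorSpan_def]
      apply Submodule.span_le.2
      rintro w ⟨a, ha, b, hb, rfl⟩
      exact V.sub_mem (hσV ha) (hσV hb)
    simpa using hsub h1
  -- there is a point of V outside σ
  have hzex : ∃ z, z ∈ V ∧ z ∉ σ := by
    by_contra h
    push_neg at h
    have huniv : ((↑) ⁻¹' σ : Set (affineSpan ℝ σ)) = Set.univ := by
      ext p
      simp only [Set.mem_preimage, Set.mem_univ, iff_true]
      exact h _ (hAV _ p.2)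
    have hfe : intrinsicFrontier ℝ σ = ∅ := by
      rw [intrinsicFrontier, huniv, frontier_univ, Set.image_empty]
    rw [hfe] at hF
    exact Set.not_nonempty_empty hF
  obtain ⟨z, hzV, hzσ⟩ := hzex
  -- hyperplane separation: a nonzero element of σ^∨ ∩ V
  set K : ConvexCone ℝ (EuclideanSpace ℝ (Fin n)) :=
    { carrier := σ
      smul_mem' := fun {c} hc {x} hx => hsmul c hc.le x hx
      add_mem' := fun {x} hx {y} hy => hadd x hx y hy } with hKdef
  obtain ⟨y, hy1, hy2⟩ :=
    ProperCone.hyperplane_separation'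
      (⟨K.toPointedCone (ConvexCone.Pointed.of_nonempty_of_isClosed (⟨0, h0σ⟩ : (K : Set (EuclideanSpace ℝ (Fin n))).Nonempty) (hclosed : IsClosed (K : Set (EuclideanSpace ℝ (Fin n))))), hclosed⟩ : ProperCone ℝ (EuclideanSpace ℝ (Fin n)))
      (x₀ := z) hzσ
  set q₀ : EuclideanSpace ℝ (Fin n) := (Submodule.orthogonalProjection V y : EuclideanSpace ℝ (Fin n)) with hq₀def
  have hproj : ∀ w ∈ V, (inner ℝ (y - q₀) w : ℝ) = 0 := fun w hw =>
    Submodule.starProjection_inner_eq_zero y w hw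
  have hq₀σ : ∀ u ∈ σ, (0 : ℝ) ≤ inner ℝ q₀ u := by
    intro u hu
    have h1 : (inner ℝ (y - q₀) u : ℝ) = 0 := hproj u (hσV hu)
    rw [inner_sub_left] at h1
    have h2 : (0 : ℝ) ≤ inner ℝ u y := hy1 u hu
    have h3 : (inner ℝ q₀ u : ℝ) = inner ℝ y u := by linarith
    rw [h3, real_inner_comm]
    exact h2
  have hq₀z : (inner ℝ q₀ z : ℝ) < 0 := by
    have h1 : (inner ℝ (y - q₀) z : ℝ) = 0 := hproj z hzV
    rw [inner_sub_left] at h1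
    have h3 : (inner ℝ q₀ z : ℝ) = inner ℝ y z := by linarith
    rw [h3, real_inner_comm]
    exact hy2
  have hq₀0 : q₀ ≠ 0 := by
    intro h0
    rw [h0, inner_zero_left] at hq₀z
    linarith
  have hq₀V : q₀ ∈ V := (Submodule.orthogonalProjection V y).2
  have hq₀D : q₀ ∈ dualCone n σ ∩ (V : Set (EuclideanSpace ℝ (Fin n))) := ⟨fun u hu => hq₀σ u hu, hq₀V⟩
  -- q is in the dual cone and in V
  have hqD : q ∈ dualCone n σ ∩ (V : Set (EuclideanSpace ℝ (Fin n))) := intrinsicInterior_subset hq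
  have hqdual : ∀ u ∈ σ, (0 : ℝ) ≤ inner ℝ q u := hqD.1
  -- q ≠ 0
  have hq0 : q ≠ 0 := by
    rintro rfl
    obtain ⟨y₀, hint, hcoe⟩ := hq
    rw [mem_interior_iff_mem_nhds, Metric.mem_nhds_iff] at hint
    obtain ⟨ε, hε, hball⟩ := hint
    have hq₀n : (0 : ℝ) < ‖q₀‖ := norm_pos_iff.2 hq₀0
    set c := ε / (2 * ‖q₀‖) with hcdef
    have hcpos : 0 < c := by positivity
    have h0A : (0 : EuclideanSpace ℝ (Fin n)) ∈ affineSpan ℝ (dualCone n σ ∩ (V : Set (EuclideanSpace ℝ (Fin n)))) := hcoe ▸ y₀.2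
    have hq₀dir : q₀ ∈ (affineSpan ℝ (dualCone n σ ∩ (V : Set (EuclideanSpace ℝ (Fin n))))).direction := by
      have := AffineSubspace.vsub_mem_direction
        (subset_affineSpan ℝ _ hq₀D) h0A
      simpa using this
    have hwA : (-c) • q₀ ∈ affineSpan ℝ (dualCone n σ ∩ (V : Set (EuclideanSpace ℝ (Fin n)))) := by
      have := AffineSubspace.vadd_mem_of_mem_direction
        (Submodule.smul_mem _ (-c) hq₀dir) h0A
      simpa [vadd_eq_add] using this
    have hwD : (-c) • q₀ ∈ dualCone n σ ∩ (V : Set (EuclideanSpace ℝ (Fin n))) := by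
      have hd : (⟨(-c) • q₀, hwA⟩ : affineSpan ℝ (dualCone n σ ∩ (V : Set (EuclideanSpace ℝ (Fin n))))) ∈
          Metric.ball y₀ ε := by
        rw [Metric.mem_ball, Subtype.dist_eq, hcoe, dist_zero_right, norm_smul,
          Real.norm_eq_abs, abs_of_neg (by linarith : -c < 0), neg_neg, hcdef]
        rw [div_mul_eq_mul_div, mul_comm, mul_div_assoc]
        calc ‖q₀‖ * (ε / (2 * ‖q₀‖)) = ε / 2 := by field_simp
          _ < ε := by linarith
      exact hball hd
    -- find u ∈ σ with ⟪q₀, u⟫ > 0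
    have hex : ∃ u ∈ σ, (0 : ℝ) < inner ℝ q₀ u := by
      by_contra h
      push_neg at h
      have horth : ∀ u ∈ σ, (inner ℝ u q₀ : ℝ) = 0 := by
        intro u hu
        have h1 := hq₀σ u hu
        have h2 := h u hu
        rw [real_inner_comm]
        linarith
      have hVo : q₀ ∈ Vᗮ := by
        rw [hV, Submodule.mem_orthogonal]
        intro u hu
        induction hu using Submodule.span_induction with
        | mem u hu => exact horth u hu
        | zero => simp
        | add u v _ _ h1 h2 => rw [inner_add_left, h1, h2, add_zero]
        | smul c u _ h1 => rw [inner_smul_left, h1, mul_zero]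
      have : (inner ℝ q₀ q₀ : ℝ) = 0 := hVo q₀ hq₀V
      rw [real_inner_self_eq_norm_sq] at this
      exact hq₀0 (by simpa using norm_eq_zero.1 (by nlinarith))
    obtain ⟨u, hu, hupos⟩ := hex
    have h1 : (0 : ℝ) ≤ inner ℝ ((-c) • q₀) u := hwD.1 u hu
    rw [real_inner_smul_left] at h1
    nlinarith [mul_pos hcpos hupos]
  have hqnorm : (0 : ℝ) < ‖q‖ := norm_pos_iff.2 hq0
  have hqV : q ∈ V := hqD.2
  -- bound on x''
  obtain ⟨M, hM⟩ := isBounded_iff_forall_norm_le.1 hx''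
  have hMx : ∀ j, ‖x'' j‖ ≤ M := fun j => hM _ (Set.mem_range_self j)
  have hM0 : 0 ≤ M := le_trans (norm_nonneg _) (hMx 0)
  -- the key lower bound
  have hkey : ∀ j, 1 ≤ Metric.infDist (x' j) (intrinsicFrontier ℝ σ) →
      Metric.infDist (x' j) (intrinsicFrontier ℝ σ) * (‖q‖ / 2) ≤ inner ℝ q (x' j) := by
    intro j hj
    set d := Metric.infDist (x' j) (intrinsicFrontier ℝ σ) with hd
    set c := d / (2 * ‖q‖) with hc
    have hcpos : 0 < c := by positivity
    have hmem : x' j + (-c) • q ∈ σ := by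
      apply aux_add_mem_of_norm_lt_infDist hclosed (hx' j)
      · exact hmemA _ (hx' j) _ (V.smul_mem _ hqV)
      · rw [norm_smul, Real.norm_eq_abs, abs_of_neg (by linarith : -c < 0), neg_neg, hc]
        rw [div_mul_eq_mul_div, mul_comm, mul_div_assoc]
        have : ‖q‖ * (d / (2 * ‖q‖)) = d / 2 := by field_simp
        rw [this]
        linarith
    have h1 : (0 : ℝ) ≤ inner ℝ q (x' j + (-c) • q) := hqdual _ hmem
    rw [inner_add_right, inner_smul_right] at h1
    have h2 : (inner ℝ q q : ℝ) = ‖q‖ ^ 2 := real_inner_self_eq_norm_sq q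
    have h3 : c * ‖q‖ ^ 2 = d * (‖q‖ / 2) := by
      rw [hc]; field_simp
    nlinarith [h1, h2, h3]
  -- conclude
  have hlow : Tendsto (fun j => Metric.infDist (x' j) (intrinsicFrontier ℝ σ) * (‖q‖ / 2)
      - ‖q‖ * M) atTop atTop := by
    apply tendsto_atTop_add_const_right
    exact hdist.atTop_mul_const (by positivity)
  apply tendsto_atTop_mono' atTop _ hlow
  filter_upwards [hdist.eventually (eventually_ge_atTop 1)] with j hj
  have h1 := hkey j hj
  have h2 : |(inner ℝ q (x'' j) : ℝ)| ≤ ‖q‖ * M := by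
    calc |(inner ℝ q (x'' j) : ℝ)| ≤ ‖q‖ * ‖x'' j‖ := abs_real_inner_le_norm q (x'' j)
      _ ≤ ‖q‖ * M := by nlinarith [hMx j, hqnorm]
  have h3 : (inner ℝ q (x' j + x'' j) : ℝ) = inner ℝ q (x' j) + inner ℝ q (x'' j) :=
    inner_add_right q (x' j) (x'' j)
  have h4 := abs_le.1 h2
  rw [h3]
  linarith [h4.1]
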